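/- The interaction energy for the potential W(x) = |x|⁴ on ℝ^d is nonnegative on mean-zero, first-moment-zero signed measures: if μ is a compactly supported finite signed measure with μ(ℝ^d) = 0 and ∫ x dμ(x) = 0, then ∬ |x − y|⁴ dμ(y) dμ(x) ≥ 0. -/

import Mathlib

open MeasureTheory Real Filter Topology Metric Set
open scoped ENNReal RealInnerProductSpace

noncomputable section

lemma quartic_aux_integrable {d : ℕ} {α : Measure (EuclideanSpace ℝ (Fin d))}
    [IsFiniteMeasure α] {K : Set (EuclideanSpace ℝ (Fin d))} (hK : IsCompact K)
    (hα : α Kᶜ = 0) {F : Type*} [NormedAddCommGroup F]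
    {f : EuclideanSpace ℝ (Fin d) → F} (hf : Continuous f) :
    Integrable f α := by
  have h1 : α.restrict K = α := by
    apply Measure.restrict_eq_self_of_ae_mem
    rw [Filter.Eventually, mem_ae_iff]
    simpa using hα
  rw [← h1]
  exact hf.continuousOn.integrableOn_compact hK

lemma quartic_aux_pointwise {d : ℕ} (x y : EuclideanSpace ℝ (Fin d)) :
    ‖x - y‖ ^ 4 =
      ‖x‖ ^ 4 * 1 + 1 * ‖y‖ ^ 4 + 2 * (‖x‖ ^ 2 * ‖y‖ ^ 2)
      + 4 * ∑ j, ∑ k, (x j * x k) * (y j * y k)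
      - 4 * ∑ j, (‖x‖ ^ 2 * x j) * (y j)
      - 4 * ∑ j, (x j) * (‖y‖ ^ 2 * y j) := by
  have hI : ⟪x, y⟫ = ∑ j, x j * y j := by
    simp [PiLp.inner_apply, RCLike.inner_apply, conj_trivial, mul_comm]
  have h2 : ‖x - y‖ ^ 2 = ‖x‖ ^ 2 - 2 * ⟪x, y⟫ + ‖y‖ ^ 2 := norm_sub_sq_real x y
  have hS2 : ∑ j, ∑ k, (x j * x k) * (y j * y k) = ⟪x, y⟫ ^ 2 := by
    rw [hI, sq, Finset.sum_mul_sum]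
    exact Finset.sum_congr rfl fun j _ => Finset.sum_congr rfl fun k _ => by ring
  have hSx : ∑ j, (‖x‖ ^ 2 * x j) * (y j) = ‖x‖ ^ 2 * ⟪x, y⟫ := by
    rw [hI, Finset.mul_sum]
    exact Finset.sum_congr rfl fun j _ => by ring
  have hSy : ∑ j, (x j) * (‖y‖ ^ 2 * y j) = ‖y‖ ^ 2 * ⟪x, y⟫ := by
    rw [hI, Finset.mul_sum]
    exact Finset.sum_congr rfl fun j _ => by ring
  rw [hS2, hSx, hSy]
  linear_combination (‖x - y‖ ^ 2 + ‖x‖ ^ 2 - 2 * ⟪x, y⟫ + ‖y‖ ^ 2) * h2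

lemma quartic_aux_expand {d : ℕ} (α β : Measure (EuclideanSpace ℝ (Fin d)))
    [IsFiniteMeasure α] [IsFiniteMeasure β]
    {K : Set (EuclideanSpace ℝ (Fin d))} (hK : IsCompact K)
    (hα : α Kᶜ = 0) (hβ : β Kᶜ = 0) :
    ∫ p, ‖p.1 - p.2‖ ^ 4 ∂(α.prod β) =
      (∫ x, ‖x‖ ^ 4 ∂α) * (β Set.univ).toReal
      + (α Set.univ).toReal * (∫ y, ‖y‖ ^ 4 ∂β)
      + 2 * ((∫ x, ‖x‖ ^ 2 ∂α) * (∫ y, ‖y‖ ^ 2 ∂β))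
      + 4 * ∑ j, ∑ k, (∫ x, x j * x k ∂α) * (∫ y, y j * y k ∂β)
      - 4 * ∑ j, (∫ x, ‖x‖ ^ 2 * x j ∂α) * (∫ y, y j ∂β)
      - 4 * ∑ j, (∫ x, x j ∂α) * (∫ y, ‖y‖ ^ 2 * y j ∂β) := by
  have contj : ∀ j, Continuous fun x : EuclideanSpace ℝ (Fin d) => x j :=
    fun j => (EuclideanSpace.proj (𝕜 := ℝ) j).continuous
  have intα : ∀ {f : EuclideanSpace ℝ (Fin d) → ℝ}, Continuous f → Integrable f α :=
    fun hf => quartic_aux_integrable hK hα hf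
  have intβ : ∀ {f : EuclideanSpace ℝ (Fin d) → ℝ}, Continuous f → Integrable f β :=
    fun hf => quartic_aux_integrable hK hβ hf
  have i1 : Integrable (fun p : EuclideanSpace ℝ (Fin d) × EuclideanSpace ℝ (Fin d) => ‖p.1‖ ^ 4 * (1 : ℝ)) (α.prod β) :=
    (intα (continuous_norm.pow 4)).mul_prod (integrable_const 1)
  have i2 : Integrable (fun p : EuclideanSpace ℝ (Fin d) × EuclideanSpace ℝ (Fin d) => (1 : ℝ) * ‖p.2‖ ^ 4) (α.prod β) :=
    (integrable_const 1).mul_prod (intβ (continuous_norm.pow 4))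
  have i3 : Integrable (fun p : EuclideanSpace ℝ (Fin d) × EuclideanSpace ℝ (Fin d) => ‖p.1‖ ^ 2 * ‖p.2‖ ^ 2) (α.prod β) :=
    (intα (continuous_norm.pow 2)).mul_prod (intβ (continuous_norm.pow 2))
  have i4jk : ∀ j k, Integrable (fun p : EuclideanSpace ℝ (Fin d) × EuclideanSpace ℝ (Fin d) => (p.1 j * p.1 k) * (p.2 j * p.2 k))
      (α.prod β) :=
    fun j k => (intα ((contj j).mul (contj k))).mul_prod (intβ ((contj j).mul (contj k)))
  have i5j : ∀ j, Integrable (fun p : EuclideanSpace ℝ (Fin d) × EuclideanSpace ℝ (Fin d) => (‖p.1‖ ^ 2 * p.1 j) * p.2 j) (α.prod β) :=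
    fun j => (intα ((continuous_norm.pow 2).mul (contj j))).mul_prod (intβ (contj j))
  have i6j : ∀ j, Integrable (fun p : EuclideanSpace ℝ (Fin d) × EuclideanSpace ℝ (Fin d) => p.1 j * (‖p.2‖ ^ 2 * p.2 j)) (α.prod β) :=
    fun j => (intα (contj j)).mul_prod (intβ ((continuous_norm.pow 2).mul (contj j)))
  have i4 : Integrable (fun p : EuclideanSpace ℝ (Fin d) × EuclideanSpace ℝ (Fin d) =>
      ∑ j, ∑ k, (p.1 j * p.1 k) * (p.2 j * p.2 k)) (α.prod β) :=
    integrable_finset_sum _ fun j _ => integrable_finset_sum _ fun k _ => i4jk j k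
  have i5 : Integrable (fun p : EuclideanSpace ℝ (Fin d) × EuclideanSpace ℝ (Fin d) => ∑ j, (‖p.1‖ ^ 2 * p.1 j) * p.2 j) (α.prod β) :=
    integrable_finset_sum _ fun j _ => i5j j
  have i6 : Integrable (fun p : EuclideanSpace ℝ (Fin d) × EuclideanSpace ℝ (Fin d) => ∑ j, p.1 j * (‖p.2‖ ^ 2 * p.2 j)) (α.prod β) :=
    integrable_finset_sum _ fun j _ => i6j j
  calc ∫ p, ‖p.1 - p.2‖ ^ 4 ∂(α.prod β)
      = ∫ p : _ × _, (‖p.1‖ ^ 4 * 1 + 1 * ‖p.2‖ ^ 4 + 2 * (‖p.1‖ ^ 2 * ‖p.2‖ ^ 2)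
          + 4 * ∑ j, ∑ k, (p.1 j * p.1 k) * (p.2 j * p.2 k)
          - 4 * ∑ j, (‖p.1‖ ^ 2 * p.1 j) * p.2 j
          - 4 * ∑ j, p.1 j * (‖p.2‖ ^ 2 * p.2 j)) ∂(α.prod β) := by
        exact integral_congr_ae (Filter.Eventually.of_forall fun p =>
          quartic_aux_pointwise p.1 p.2)
    _ = (∫ x, ‖x‖ ^ 4 ∂α) * (β Set.univ).toReal
      + (α Set.univ).toReal * (∫ y, ‖y‖ ^ 4 ∂β)
      + 2 * ((∫ x, ‖x‖ ^ 2 ∂α) * (∫ y, ‖y‖ ^ 2 ∂β))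
      + 4 * ∑ j, ∑ k, (∫ x, x j * x k ∂α) * (∫ y, y j * y k ∂β)
      - 4 * ∑ j, (∫ x, ‖x‖ ^ 2 * x j ∂α) * (∫ y, y j ∂β)
      - 4 * ∑ j, (∫ x, x j ∂α) * (∫ y, ‖y‖ ^ 2 * y j ∂β) := by
        have i3c : Integrable (fun p : EuclideanSpace ℝ (Fin d) × EuclideanSpace ℝ (Fin d) =>
            2 * (‖p.1‖ ^ 2 * ‖p.2‖ ^ 2)) (α.prod β) := by exact i3.const_mul 2
        have i4c : Integrable (fun p : EuclideanSpace ℝ (Fin d) × EuclideanSpace ℝ (Fin d) =>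
            4 * ∑ j, ∑ k, (p.1 j * p.1 k) * (p.2 j * p.2 k)) (α.prod β) := by
          exact i4.const_mul 4
        have i5c : Integrable (fun p : EuclideanSpace ℝ (Fin d) × EuclideanSpace ℝ (Fin d) =>
            4 * ∑ j, (‖p.1‖ ^ 2 * p.1 j) * p.2 j) (α.prod β) := by exact i5.const_mul 4
        have i6c : Integrable (fun p : EuclideanSpace ℝ (Fin d) × EuclideanSpace ℝ (Fin d) =>
            4 * ∑ j, p.1 j * (‖p.2‖ ^ 2 * p.2 j)) (α.prod β) := by exact i6.const_mul 4
        have j2 : Integrable (fun p : EuclideanSpace ℝ (Fin d) × EuclideanSpace ℝ (Fin d) =>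
            ‖p.1‖ ^ 4 * 1 + 1 * ‖p.2‖ ^ 4) (α.prod β) := by exact i1.add i2
        have j3 : Integrable (fun p : EuclideanSpace ℝ (Fin d) × EuclideanSpace ℝ (Fin d) =>
            ‖p.1‖ ^ 4 * 1 + 1 * ‖p.2‖ ^ 4 + 2 * (‖p.1‖ ^ 2 * ‖p.2‖ ^ 2)) (α.prod β) := by
          exact j2.add i3c
        have j4 : Integrable (fun p : EuclideanSpace ℝ (Fin d) × EuclideanSpace ℝ (Fin d) =>
            ‖p.1‖ ^ 4 * 1 + 1 * ‖p.2‖ ^ 4 + 2 * (‖p.1‖ ^ 2 * ‖p.2‖ ^ 2)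
            + 4 * ∑ j, ∑ k, (p.1 j * p.1 k) * (p.2 j * p.2 k)) (α.prod β) := by
          exact j3.add i4c
        have j5 : Integrable (fun p : EuclideanSpace ℝ (Fin d) × EuclideanSpace ℝ (Fin d) =>
            ‖p.1‖ ^ 4 * 1 + 1 * ‖p.2‖ ^ 4 + 2 * (‖p.1‖ ^ 2 * ‖p.2‖ ^ 2)
            + 4 * ∑ j, ∑ k, (p.1 j * p.1 k) * (p.2 j * p.2 k)
            - 4 * ∑ j, (‖p.1‖ ^ 2 * p.1 j) * p.2 j) (α.prod β) := by exact j4.sub i5c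
        rw [integral_sub j5 i6c, integral_sub j4 i5c, integral_add j3 i4c,
          integral_add j2 i3c, integral_add i1 i2,
          integral_const_mul (4 : ℝ), integral_const_mul (4 : ℝ), integral_const_mul (4 : ℝ),
          integral_const_mul (2 : ℝ),
          integral_prod_mul (μ := α) (ν := β) (fun x => ‖x‖ ^ 4) (fun _ => (1 : ℝ)),
          integral_prod_mul (μ := α) (ν := β) (fun _ => (1 : ℝ)) (fun y => ‖y‖ ^ 4),
          integral_prod_mul (μ := α) (ν := β) (fun x => ‖x‖ ^ 2) (fun y => ‖y‖ ^ 2)]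
        rw [integral_finset_sum _ fun j _ => integrable_finset_sum _ fun k _ => i4jk j k,
          integral_finset_sum _ fun j _ => i5j j,
          integral_finset_sum _ fun j _ => i6j j]
        simp only [integral_const, smul_eq_mul, mul_one, one_mul]
        congr 1
        · congr 1
          · congr 1
            congr 1
            refine Finset.sum_congr rfl fun j _ => ?_
            rw [integral_finset_sum _ fun k _ => i4jk j k]
            exact Finset.sum_congr rfl fun k _ =>
              integral_prod_mul (μ := α) (ν := β) (fun x => x j * x k) (fun y => y j * y k)
          · congr 1
            exact Finset.sum_congr rfl fun j _ =>
              integral_prod_mul (μ := α) (ν := β) (fun x => ‖x‖ ^ 2 * x j) (fun y => y j)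
        · congr 1
          exact Finset.sum_congr rfl fun j _ =>
            integral_prod_mul (μ := α) (ν := β) (fun x => x j) (fun y => ‖y‖ ^ 2 * y j)

/-- The interaction energy of the potential `|x|⁴` is nonnegative on compactly supported
signed measures with vanishing total mass and first moment:
`∬ |x-y|⁴ dμ(y) dμ(x) ≥ 0`, the double integral being expanded through the Jordan
decomposition `μ = μ⁺ - μ⁻`. -/
theorem quartic_energy_nonneg
    {d : ℕ} (hd : 0 < d) (μ : SignedMeasure (EuclideanSpace ℝ (Fin d)))
    (hcpt : ∃ K : Set (EuclideanSpace ℝ (Fin d)), IsCompact K ∧ μ.totalVariation Kᶜ = 0)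
    (hmass : μ Set.univ = 0)
    (hmoment : (∫ x, x ∂μ.toJordanDecomposition.posPart)
      = (∫ x, x ∂μ.toJordanDecomposition.negPart)) :
    0 ≤ (∫ p, ‖p.1 - p.2‖ ^ 4
          ∂((μ.toJordanDecomposition.posPart).prod (μ.toJordanDecomposition.posPart)))
        + (∫ p, ‖p.1 - p.2‖ ^ 4
          ∂((μ.toJordanDecomposition.negPart).prod (μ.toJordanDecomposition.negPart)))
        - 2 * ∫ p, ‖p.1 - p.2‖ ^ 4
          ∂((μ.toJordanDecomposition.posPart).prod (μ.toJordanDecomposition.negPart)) := by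
  obtain ⟨K, hK, hTV⟩ := hcpt
  set P := μ.toJordanDecomposition.posPart with hP
  set N := μ.toJordanDecomposition.negPart with hN
  have hPK : P Kᶜ = 0 := by
    have := hTV
    rw [SignedMeasure.totalVariation, Measure.add_apply] at this
    exact (add_eq_zero.mp this).1
  have hNK : N Kᶜ = 0 := by
    have := hTV
    rw [SignedMeasure.totalVariation, Measure.add_apply] at this
    exact (add_eq_zero.mp this).2
  -- equal total masses
  have hm : (P Set.univ).toReal = (N Set.univ).toReal := by
    have h1 : μ Set.univ = (P Set.univ).toReal - (N Set.univ).toReal := by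
      conv_lhs => rw [← μ.toSignedMeasure_toJordanDecomposition]
      rw [JordanDecomposition.toSignedMeasure]
      exact Measure.toSignedMeasure_sub_apply MeasurableSet.univ
    rw [hmass] at h1
    linarith
  -- equal first moments componentwise
  have hv : ∀ j, (∫ x, x j ∂P) = ∫ x, x j ∂N := by
    intro j
    have h1 : ∫ x, x j ∂P = (∫ x, x ∂P) j :=
      ContinuousLinearMap.integral_comp_comm (EuclideanSpace.proj (𝕜 := ℝ) j)
        (quartic_aux_integrable hK hPK continuous_id)
    have h2 : ∫ x, x j ∂N = (∫ x, x ∂N) j :=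
      ContinuousLinearMap.integral_comp_comm (EuclideanSpace.proj (𝕜 := ℝ) j)
        (quartic_aux_integrable hK hNK continuous_id)
    rw [h1, h2, hmoment]
  rw [quartic_aux_expand P P hK hPK hPK, quartic_aux_expand N N hK hNK hNK,
    quartic_aux_expand P N hK hPK hNK]
  simp only [hv, hm]
  have hcom1 : ∑ j, (∫ x, x j ∂N) * (∫ y, ‖y‖ ^ 2 * y j ∂P)
      = ∑ j, (∫ x, ‖x‖ ^ 2 * x j ∂P) * (∫ y, y j ∂N) :=
    Finset.sum_congr rfl fun j _ => mul_comm _ _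
  have hcom2 : ∑ j, (∫ x, x j ∂N) * (∫ y, ‖y‖ ^ 2 * y j ∂N)
      = ∑ j, (∫ x, ‖x‖ ^ 2 * x j ∂N) * (∫ y, y j ∂N) :=
    Finset.sum_congr rfl fun j _ => mul_comm _ _
  rw [hcom1, hcom2]
  have hS : 0 ≤ (∑ j, ∑ k, (∫ x, x j * x k ∂P) * (∫ y, y j * y k ∂P))
      + (∑ j, ∑ k, (∫ x, x j * x k ∂N) * (∫ y, y j * y k ∂N))
      - 2 * ∑ j, ∑ k, (∫ x, x j * x k ∂P) * (∫ y, y j * y k ∂N) := by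
    have heq : (∑ j, ∑ k, (∫ x, x j * x k ∂P) * (∫ y, y j * y k ∂P))
        + (∑ j, ∑ k, (∫ x, x j * x k ∂N) * (∫ y, y j * y k ∂N))
        - 2 * ∑ j, ∑ k, (∫ x, x j * x k ∂P) * (∫ y, y j * y k ∂N)
        = ∑ j, ∑ k, ((∫ x, x j * x k ∂P) - (∫ x, x j * x k ∂N)) ^ 2 := by
      rw [Finset.mul_sum, ← Finset.sum_add_distrib, ← Finset.sum_sub_distrib]
      refine Finset.sum_congr rfl fun j _ => ?_
      rw [Finset.mul_sum, ← Finset.sum_add_distrib, ← Finset.sum_sub_distrib]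
      exact Finset.sum_congr rfl fun k _ => by ring
    rw [heq]
    exact Finset.sum_nonneg fun j _ => Finset.sum_nonneg fun k _ => sq_nonneg _
  nlinarith [sq_nonneg ((∫ x, ‖x‖ ^ 2 ∂P) - (∫ x, ‖x‖ ^ 2 ∂N)), hS]

end
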